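/- Let U and V be m-dimensional subspaces of H with respective orthonormal bases ψ₁,…,ψ_m and φ₁,…,φ_m, and let |ψ_A⟩ and |φ_A⟩ be the corresponding determinant states. Then |⟨ψ_A, φ_A⟩|² / (‖ψ_A‖² · ‖φ_A‖²) = det G̃, where G̃ is the m×m Gram matrix of the orthogonal projections of the φ_k onto U, i.e. G̃_{ij} = ⟨P_U φ_i, P_U φ_j⟩ with P_U the orthogonal projection of H onto U. -/

import Mathlib

open scoped TensorProduct InnerProductSpace

/-- The permutation operator `P_σ` on the `m`-fold tensor power, acting on elementary
tensors by `P_σ (x₁ ⊗ ⋯ ⊗ x_m) = x_{σ⁻¹(1)} ⊗ ⋯ ⊗ x_{σ⁻¹(m)}`. -/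
noncomputable def permOp {H : Type*} [AddCommGroup H] [Module ℂ H] {m : ℕ}
    (σ : Equiv.Perm (Fin m)) :
    (⨂[ℂ] _ : Fin m, H) →ₗ[ℂ] ⨂[ℂ] _ : Fin m, H :=
  (PiTensorProduct.reindex ℂ (fun _ : Fin m => H) σ).toLinearMap

/-- The antisymmetrizer `S₋ = (1/m!) Σ_σ sgn(σ) P_σ`. -/
noncomputable def antisymmetrizer (H : Type*) [AddCommGroup H] [Module ℂ H] (m : ℕ) :
    (⨂[ℂ] _ : Fin m, H) →ₗ[ℂ] ⨂[ℂ] _ : Fin m, H :=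
  (m.factorial : ℂ)⁻¹ • ∑ σ : Equiv.Perm (Fin m), (((Equiv.Perm.sign σ : ℤ) : ℂ)) • permOp σ

/-- The determinant state `|φ_A⟩ = S₋ (φ₁ ⊗ ⋯ ⊗ φ_m)` of a family `φ₁, …, φ_m`. -/
noncomputable def detState {H : Type*} [AddCommGroup H] [Module ℂ H] {m : ℕ}
    (φ : Fin m → H) : ⨂[ℂ] _ : Fin m, H :=
  antisymmetrizer H m (PiTensorProduct.tprod ℂ φ)

lemma detState_eq {H : Type*} [AddCommGroup H] [Module ℂ H] {m : ℕ} (z : Fin m → H) :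
    detState z = (m.factorial : ℂ)⁻¹ •
      ∑ σ : Equiv.Perm (Fin m), (((Equiv.Perm.sign σ : ℤ) : ℂ)) •
        PiTensorProduct.tprod ℂ (fun i => z (σ.symm i)) := by
  simp [detState, antisymmetrizer, permOp, LinearMap.sum_apply, PiTensorProduct.reindex_tprod]

lemma sum_perm_key {H : Type*} [NormedAddCommGroup H] [InnerProductSpace ℂ H] {m : ℕ}
    (x y : Fin m → H) (σ : Equiv.Perm (Fin m)) :
      ∑ τ : Equiv.Perm (Fin m),
        (((Equiv.Perm.sign τ : ℤ) : ℂ)) * ∏ i, ⟪x (σ.symm i), y (τ.symm i)⟫_ℂ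
      = (((Equiv.Perm.sign σ : ℤ) : ℂ)) *
          Matrix.det (Matrix.of fun i j => ⟪x i, y j⟫_ℂ) := by
  have hdet : Matrix.det (Matrix.of fun i j => ⟪x i, y j⟫_ℂ)
      = ∑ ρ : Equiv.Perm (Fin m), (((Equiv.Perm.sign ρ : ℤ) : ℂ)) * ∏ i, ⟪x i, y (ρ i)⟫_ℂ := by
    rw [← Matrix.det_transpose, Matrix.det_apply']
    simp [Matrix.transpose_apply]
  rw [hdet, Finset.mul_sum]
  rw [← Equiv.sum_comp ((Equiv.inv (Equiv.Perm (Fin m))).trans (Equiv.mulLeft σ))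
    (fun τ => (((Equiv.Perm.sign τ : ℤ) : ℂ)) * ∏ i, ⟪x (σ.symm i), y (τ.symm i)⟫_ℂ)]
  refine Finset.sum_congr rfl fun ρ _ => ?_
  have h1 : ∏ i, ⟪x (σ.symm i), y ((σ * ρ⁻¹).symm i)⟫_ℂ = ∏ j, ⟪x j, y (ρ j)⟫_ℂ := by
    rw [← Equiv.prod_comp σ.symm (fun j => ⟪x j, y (ρ j)⟫_ℂ)]
    refine Finset.prod_congr rfl fun i _ => ?_
    rfl
  simp only [Equiv.trans_apply, Equiv.inv_apply, Equiv.coe_mulLeft]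
  rw [h1]
  simp [Equiv.Perm.sign_mul]
  ring

lemma sum_perm_key2 {H : Type*} [NormedAddCommGroup H] [InnerProductSpace ℂ H] {m : ℕ}
    (x y : Fin m → H) (σ : Equiv.Perm (Fin m)) :
      ∑ τ : Equiv.Perm (Fin m),
        (((Equiv.Perm.sign τ : ℤ) : ℂ)) * ∏ i, ⟪x (τ.symm i), y (σ.symm i)⟫_ℂ
      = (((Equiv.Perm.sign σ : ℤ) : ℂ)) *
          Matrix.det (Matrix.of fun i j => ⟪x i, y j⟫_ℂ) := by
  rw [Matrix.det_apply', Finset.mul_sum]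
  rw [← Equiv.sum_comp ((Equiv.inv (Equiv.Perm (Fin m))).trans (Equiv.mulLeft σ))
    (fun τ => (((Equiv.Perm.sign τ : ℤ) : ℂ)) * ∏ i, ⟪x (τ.symm i), y (σ.symm i)⟫_ℂ)]
  refine Finset.sum_congr rfl fun ρ _ => ?_
  have h1 : ∏ i, ⟪x ((σ * ρ⁻¹).symm i), y (σ.symm i)⟫_ℂ = ∏ j, ⟪x (ρ j), y j⟫_ℂ := by
    rw [← Equiv.prod_comp σ.symm (fun j => ⟪x (ρ j), y j⟫_ℂ)]
    exact Finset.prod_congr rfl fun i _ => rfl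
  simp only [Equiv.trans_apply, Equiv.inv_apply, Equiv.coe_mulLeft]
  rw [h1]
  simp [Equiv.Perm.sign_mul, Matrix.det_apply']
  ring

lemma inn_detState_eq {H : Type*} [NormedAddCommGroup H] [InnerProductSpace ℂ H] {m : ℕ}
    (inn : (⨂[ℂ] _ : Fin m, H) →ₗ⋆[ℂ] (⨂[ℂ] _ : Fin m, H) →ₗ[ℂ] ℂ)
    (h_inn : ∀ x y : Fin m → H,
      inn (PiTensorProduct.tprod ℂ x) (PiTensorProduct.tprod ℂ y) = ∏ i, ⟪x i, y i⟫_ℂ)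
    (x y : Fin m → H) :
    inn (detState x) (detState y)
      = (m.factorial : ℂ)⁻¹ * Matrix.det (Matrix.of fun i j => ⟪x i, y j⟫_ℂ) := by
  rw [detState_eq, detState_eq]
  simp only [map_smulₛₗ, map_sum, map_smul, LinearMap.smul_apply, LinearMap.sum_apply,
    smul_eq_mul, h_inn, RingHom.id_apply, starRingEnd_apply, star_inv₀, star_natCast, star_intCast]
  have key : ∀ σ : Equiv.Perm (Fin m),
      (((Equiv.Perm.sign σ : ℤ) : ℂ)) * ∑ τ : Equiv.Perm (Fin m),
        (((Equiv.Perm.sign τ : ℤ) : ℂ)) * ∏ i, ⟪x (τ.symm i), y (σ.symm i)⟫_ℂ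
      = Matrix.det (Matrix.of fun i j => ⟪x i, y j⟫_ℂ) := by
    intro σ
    rw [sum_perm_key2, ← mul_assoc, ← Int.cast_mul, ← Units.val_mul,
      Int.units_mul_self, Units.val_one, Int.cast_one, one_mul]
  have h3 : ∀ σ : Equiv.Perm (Fin m),
      (((Equiv.Perm.sign σ : ℤ) : ℂ)) * ((m.factorial : ℂ)⁻¹ *
        ∑ τ : Equiv.Perm (Fin m),
          (((Equiv.Perm.sign τ : ℤ) : ℂ)) * ∏ i, ⟪x (τ.symm i), y (σ.symm i)⟫_ℂ)
      = (m.factorial : ℂ)⁻¹ * Matrix.det (Matrix.of fun i j => ⟪x i, y j⟫_ℂ) := by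
    intro σ
    rw [mul_left_comm, key σ]
  rw [Finset.sum_congr rfl (fun σ _ => h3 σ), Finset.sum_const, Finset.card_univ,
    Fintype.card_perm, Fintype.card_fin, nsmul_eq_mul]
  have hm : (m.factorial : ℂ) ≠ 0 := Nat.cast_ne_zero.2 (Nat.factorial_ne_zero m)
  field_simp

/-- For `m`-dimensional subspaces `U, V` with orthonormal bases `ψ` and `φ`,
`|⟨ψ_A, φ_A⟩|² / (‖ψ_A‖² ‖φ_A‖²) = det G̃`, where `G̃_{ij} = ⟨P_U φ_i, P_U φ_j⟩` is the Gram
matrix of the orthogonal projections of the `φ_k` onto `U`.  (Here `‖x‖² = ⟨x, x⟩` for the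
tensor-power inner product `inn`.) -/
theorem detState_fidelity_eq_det_gram_proj
    {H : Type*} [NormedAddCommGroup H] [InnerProductSpace ℂ H] [FiniteDimensional ℂ H]
    {m : ℕ}
    (inn : (⨂[ℂ] _ : Fin m, H) →ₗ⋆[ℂ] (⨂[ℂ] _ : Fin m, H) →ₗ[ℂ] ℂ)
    (h_inn : ∀ x y : Fin m → H,
      inn (PiTensorProduct.tprod ℂ x) (PiTensorProduct.tprod ℂ y) = ∏ i, ⟪x i, y i⟫_ℂ)
    (U V : Submodule ℂ H) (ψ φ : Fin m → H)
    (hψon : Orthonormal ℂ ψ) (hφon : Orthonormal ℂ φ)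
    (hψU : Submodule.span ℂ (Set.range ψ) = U)
    (hφV : Submodule.span ℂ (Set.range φ) = V) :
    ((‖inn (detState ψ) (detState φ)‖ : ℂ)^2)
        / (inn (detState ψ) (detState ψ) * inn (detState φ) (detState φ))
      = Matrix.det (Matrix.of fun i j =>
          ⟪((Submodule.orthogonalProjection U (φ i) : U) : H),
            ((Submodule.orthogonalProjection U (φ j) : U) : H)⟫_ℂ) := by
  classical
  have hm : (m.factorial : ℂ) ≠ 0 := Nat.cast_ne_zero.2 (Nat.factorial_ne_zero m)
  set M : Matrix (Fin m) (Fin m) ℂ := Matrix.of fun i j => ⟪ψ i, φ j⟫_ℂ with hMdef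
  have h1 : inn (detState ψ) (detState φ) = (m.factorial : ℂ)⁻¹ * M.det :=
    inn_detState_eq inn h_inn ψ φ
  have hψ1 : (Matrix.of fun i j => ⟪ψ i, ψ j⟫_ℂ) = (1 : Matrix (Fin m) (Fin m) ℂ) := by
    ext i j
    simpa [Matrix.one_apply] using (orthonormal_iff_ite.mp hψon i j)
  have hφ1 : (Matrix.of fun i j => ⟪φ i, φ j⟫_ℂ) = (1 : Matrix (Fin m) (Fin m) ℂ) := by
    ext i j
    simpa [Matrix.one_apply] using (orthonormal_iff_ite.mp hφon i j)
  have h2 : inn (detState ψ) (detState ψ) = (m.factorial : ℂ)⁻¹ := by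
    rw [inn_detState_eq inn h_inn, hψ1, Matrix.det_one, mul_one]
  have h3 : inn (detState φ) (detState φ) = (m.factorial : ℂ)⁻¹ := by
    rw [inn_detState_eq inn h_inn, hφ1, Matrix.det_one, mul_one]
  -- the projection onto U expanded in the orthonormal basis ψ
  have hmem : ∀ i, ψ i ∈ U := fun i => hψU ▸ Submodule.subset_span (Set.mem_range_self i)
  have hsp : ⊤ ≤ Submodule.span ℂ (Set.range (Set.codRestrict ψ U hmem)) := by
    rintro ⟨u, hu⟩ -
    rw [← hψU] at hu
    obtain ⟨c, hc⟩ := (Submodule.mem_span_range_iff_exists_fun ℂ).mp hu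
    rw [Submodule.mem_span_range_iff_exists_fun]
    refine ⟨c, ?_⟩
    apply Subtype.ext
    simpa [Set.codRestrict] using hc
  let b : OrthonormalBasis (Fin m) ℂ U := OrthonormalBasis.mk (hψon.codRestrict U hmem) hsp
  have hb : ∀ i, (b i : H) = ψ i := fun i => by
    simp only [b, OrthonormalBasis.coe_mk]
    rfl
  have hproj : ∀ v : H, ((Submodule.orthogonalProjectionOnto U v : U) : H) = ∑ k, ⟪ψ k, v⟫_ℂ • ψ k := by
    intro v
    rw [b.orthogonalProjectionOnto_apply_eq_sum]
    push_cast
    simp [hb]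
  have hG : (Matrix.of fun i j =>
      ⟪((Submodule.orthogonalProjection U (φ i) : U) : H),
        ((Submodule.orthogonalProjection U (φ j) : U) : H)⟫_ℂ) = M.conjTranspose * M := by
    ext i j
    rw [Matrix.of_apply]
    change ⟪U.starProjection (φ i), ((U.orthogonalProjectionOnto (φ j) : U) : H)⟫_ℂ = _
    rw [Submodule.inner_starProjection_left_eq_right U (φ i)
        ((U.orthogonalProjectionOnto (φ j) : U) : H),
      Submodule.starProjection_mem_subspace_eq_self, hproj, inner_sum, Matrix.mul_apply]
    refine Finset.sum_congr rfl fun k _ => ?_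
    rw [inner_smul_right, Matrix.conjTranspose_apply, hMdef, Matrix.of_apply, Matrix.of_apply,
      ← inner_conj_symm (φ i) (ψ k), starRingEnd_apply]
    exact mul_comm _ _
  rw [h1, h2, h3, hG, Matrix.det_mul, Matrix.det_conjTranspose]
  rw [← Complex.ofReal_pow, Complex.sq_norm, Complex.normSq_eq_conj_mul_self]
  rw [map_mul, map_inv₀, Complex.conj_natCast]
  field_simp
  rw [starRingEnd_apply, mul_comm]
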